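/- Let u_h > 0 and set χ = 2 u_h^6 + 3(9 + √(81 + 12 u_h^6)). Then the number u_+ = (1/3)·( u_h³ + (2/χ)^{1/3} u_h^5 + (2/χ)^{−1/3} u_h ) is positive and satisfies 1 + u_+² − u_+³/u_h³ = 0; that is, u_+ is the (unique) positive root of the d = 4 blackening function h(u) = 1 + u² − u³/u_h³. -/

import Mathlib

/-- Closed-form (Cardano) expression for the unique positive root of the `d = 4`
blackening function `h(u) = 1 + u² − u³/u_h³`. -/
theorem cardano_root_d4 (uh : ℝ) (huh : 0 < uh) (χ up : ℝ)
    (hχ : χ = 2 * uh ^ 6 + 3 * (9 + Real.sqrt (81 + 12 * uh ^ 6)))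
    (hup : up = (1 / 3) * (uh ^ 3 + (2 / χ) ^ ((1 : ℝ) / 3) * uh ^ 5
        + (2 / χ) ^ (-(1 : ℝ) / 3) * uh)) :
    0 < up ∧ 1 + up ^ 2 - up ^ 3 / uh ^ 3 = 0 ∧
      ∀ v : ℝ, 0 < v → 1 + v ^ 2 - v ^ 3 / uh ^ 3 = 0 → v = up := by
  have hs0 : (0:ℝ) ≤ 81 + 12 * uh ^ 6 := by positivity
  set s := Real.sqrt (81 + 12 * uh ^ 6) with hsdef
  have hs2 : s ^ 2 = 81 + 12 * uh ^ 6 := Real.sq_sqrt hs0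
  have hχ' : χ = 2 * uh ^ 6 + 27 + 3 * s := by rw [hχ]; ring
  have hsnn : 0 ≤ s := Real.sqrt_nonneg _
  have hχ0 : 0 < χ := by rw [hχ']; positivity
  have hq0 : (0:ℝ) < 2 / χ := by positivity
  set y := (2 / χ) ^ ((1:ℝ)/3) with hydef
  have hy0 : 0 < y := Real.rpow_pos_of_pos hq0 _
  have hy3 : y ^ 3 = 2 / χ := by
    rw [hydef, ← Real.rpow_natCast ((2/χ) ^ ((1:ℝ)/3)) 3, ← Real.rpow_mul hq0.le]
    norm_num
  have hneg : (2 / χ) ^ (-(1:ℝ)/3) = y⁻¹ := by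
    rw [show (-(1:ℝ)/3) = -(1/3) by norm_num, Real.rpow_neg hq0.le, hydef]
  have hup' : up = (uh ^ 3 + y * uh ^ 5 + uh / y) / 3 := by
    rw [hup, hneg]; field_simp
  have hup0 : 0 < up := by rw [hup']; positivity
  -- key quadratic identity for χ
  have hχsq : χ ^ 2 = χ * (4 * uh ^ 6 + 54) - 4 * uh ^ 12 := by
    linear_combination (χ - 2 * uh ^ 6 - 27 + 3 * s) * hχ' + 9 * hs2
  have h2 : y ^ 3 * uh ^ 15 + uh ^ 3 / y ^ 3 = 2 * uh ^ 9 + 27 * uh ^ 3 := by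
    rw [hy3]
    field_simp
    linear_combination hχsq
  have hroot : up ^ 3 = uh ^ 3 * (1 + up ^ 2) := by
    have hP3 : (y * uh ^ 5 + uh / y) ^ 3
        = y ^ 3 * uh ^ 15 + uh ^ 3 / y ^ 3 + 3 * uh ^ 6 * (y * uh ^ 5 + uh / y) := by
      field_simp; ring
    have hQ3 : (y * uh ^ 5 + uh / y) ^ 3
        = 2 * uh ^ 9 + 27 * uh ^ 3 + 3 * uh ^ 6 * (y * uh ^ 5 + uh / y) := by
      linear_combination hP3 + h2
    rw [hup']
    linear_combination (1/27 : ℝ) * hQ3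
  have hzero : 1 + up ^ 2 - up ^ 3 / uh ^ 3 = 0 := by
    have huh3 : uh ^ 3 ≠ 0 := by positivity
    field_simp
    linear_combination -hroot
  refine ⟨hup0, hzero, ?_⟩
  intro v hv hveq
  have hv3 : v ^ 3 = uh ^ 3 * (1 + v ^ 2) := by
    have huh3 : uh ^ 3 ≠ 0 := by positivity
    field_simp at hveq
    linear_combination -hveq
  have hfac : (v - up) * (v ^ 2 + v * up + up ^ 2 + v ^ 2 * up ^ 2) = 0 := by
    linear_combination (1 + up ^ 2) * hv3 - (1 + v ^ 2) * hroot
  have hpos : 0 < v ^ 2 + v * up + up ^ 2 + v ^ 2 * up ^ 2 := by positivity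
  have := mul_eq_zero.mp hfac
  rcases this with h | h
  · linarith
  · exact absurd h (ne_of_gt hpos)
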